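/- Let h : 𝒞 → ℝ and let v₁, v₂ be distinct vertices of V(G) \ {s,t}. Then h(C) = 0 for all cuts C not crossed by the edge v₁ → v₂ (i.e., all cuts where it is not the case that v₁ ∈ L(C) and v₂ ∈ R(C)) if and only if h can be written in the form Σ_{V ⊆ V(G)\{s,t,v₁,v₂}} c_V (e_V − e_{V ∪ {v₁}} + e_{V ∪ {v₂}} − e_{V ∪ {v₁,v₂}}). -/

import Mathlib

/-- An s-t cut: each vertex is assigned to the left side (`true`) or right side (`false`),
with `s` on the left and `t` on the right. -/
abbrev STCut (V : Type*) (s t : V) := {C : V → Bool // C s = true ∧ C t = false}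

/-- The Fourier basis function `e_W(C) = (-1)^{|W ∩ L(C)|}`. -/
def eFun {V : Type*} [DecidableEq V] {s t : V} (W : Finset V) (C : STCut V s t) : ℝ :=
  (-1 : ℝ) ^ (W.filter (fun v => C.1 v = true)).card

section
variable {V : Type*} [DecidableEq V] {s t : V}

lemma eFun_eq_prod (W : Finset V) (C : STCut V s t) :
    eFun W C = ∏ v ∈ W, (if C.1 v = true then (-1:ℝ) else 1) := by
  rw [Finset.prod_ite, Finset.prod_const, Finset.prod_const, one_pow, mul_one, eFun]

lemma eFun_insert (v : V) (W : Finset V) (hv : v ∉ W) (C : STCut V s t) :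
    eFun (insert v W) C = (if C.1 v = true then (-1:ℝ) else 1) * eFun W C := by
  rw [eFun_eq_prod, eFun_eq_prod, Finset.prod_insert hv]

lemma combo_eval {v₁ v₂ : V} (W : Finset V) (h1 : v₁ ∉ W) (h2 : v₂ ∉ W) (hne : v₁ ≠ v₂)
    (C : STCut V s t) :
    eFun W C - eFun (insert v₁ W) C + eFun (insert v₂ W) C
      - eFun (insert v₁ (insert v₂ W)) C
      = if C.1 v₁ = true ∧ C.1 v₂ = false then 4 * eFun W C else 0 := by
  rw [eFun_insert v₁ W h1, eFun_insert v₂ W h2,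
    eFun_insert v₁ _ (by simp [hne, h1]), eFun_insert v₂ W h2]
  rcases Bool.eq_false_or_eq_true (C.1 v₁) with hb1 | hb1 <;>
    rcases Bool.eq_false_or_eq_true (C.1 v₂) with hb2 | hb2 <;>
      simp [hb1, hb2] <;> ring

lemma orth (A : Finset V) (C C' : STCut V s t) :
    ∑ W ∈ A.powerset, eFun W C * eFun W C'
      = if ∀ v ∈ A, C.1 v = C'.1 v then (2:ℝ) ^ A.card else 0 := by
  have key : ∀ W ∈ A.powerset, eFun W C * eFun W C' =
      (∏ v ∈ W, ((if C.1 v = true then (-1:ℝ) else 1) * (if C'.1 v = true then (-1:ℝ) else 1)))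
        * ∏ v ∈ A \ W, (1:ℝ) := by
    intro W _
    rw [eFun_eq_prod, eFun_eq_prod, ← Finset.prod_mul_distrib, Finset.prod_const_one, mul_one]
  rw [Finset.sum_congr rfl key, ← Finset.prod_add]
  by_cases hall : ∀ v ∈ A, C.1 v = C'.1 v
  · rw [if_pos hall, ← Finset.prod_const]
    refine Finset.prod_congr rfl fun v hv => ?_
    rw [hall v hv]
    rcases Bool.eq_false_or_eq_true (C'.1 v) with hb | hb <;> simp [hb] <;> norm_num
  · rw [if_neg hall]
    push_neg at hall
    obtain ⟨v, hv, hvne⟩ := hall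
    refine Finset.prod_eq_zero hv ?_
    rcases Bool.eq_false_or_eq_true (C.1 v) with hb | hb <;>
      rcases Bool.eq_false_or_eq_true (C'.1 v) with hb' | hb' <;>
        simp_all

end

lemma index_eq {V : Type*} [Fintype V] [DecidableEq V] (s t v₁ v₂ : V) :
    Finset.univ.filter (fun W : Finset V => s ∉ W ∧ t ∉ W ∧ v₁ ∉ W ∧ v₂ ∉ W)
      = (Finset.univ \ {s, t, v₁, v₂}).powerset := by
  ext W
  simp only [Finset.mem_filter, Finset.mem_univ, true_and, Finset.mem_powerset,
    Finset.subset_iff, Finset.mem_sdiff, Finset.mem_insert, Finset.mem_singleton]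
  constructor
  · rintro ⟨hs, ht, h1, h2⟩ x hx
    rintro (rfl | rfl | rfl | rfl) <;> tauto
  · intro hW
    exact ⟨fun hs => hW hs (Or.inl rfl), fun ht => hW ht (Or.inr (Or.inl rfl)),
      fun h1 => hW h1 (Or.inr (Or.inr (Or.inl rfl))),
      fun h2 => hW h2 (Or.inr (Or.inr (Or.inr rfl)))⟩

theorem stmt4 {V : Type*} [Fintype V] [DecidableEq V] (s t v₁ v₂ : V) (hst : s ≠ t)
    (hv₁s : v₁ ≠ s) (hv₁t : v₁ ≠ t) (hv₂s : v₂ ≠ s) (hv₂t : v₂ ≠ t) (hne : v₁ ≠ v₂)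
    (h : STCut V s t → ℝ) :
    (∀ C : STCut V s t, ¬(C.1 v₁ = true ∧ C.1 v₂ = false) → h C = 0) ↔
      ∃ c : Finset V → ℝ,
        h = ∑ W ∈ Finset.univ.filter
              (fun W : Finset V => s ∉ W ∧ t ∉ W ∧ v₁ ∉ W ∧ v₂ ∉ W),
          c W • ((eFun W : STCut V s t → ℝ) - eFun (insert v₁ W) + eFun (insert v₂ W)
            - eFun (insert v₁ (insert v₂ W))) := by
  set A : Finset V := Finset.univ \ {s, t, v₁, v₂} with hA
  have hmem : ∀ W ∈ Finset.univ.filter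
      (fun W : Finset V => s ∉ W ∧ t ∉ W ∧ v₁ ∉ W ∧ v₂ ∉ W), v₁ ∉ W ∧ v₂ ∉ W := by
    intro W hW
    simp only [Finset.mem_filter] at hW
    exact ⟨hW.2.2.2.1, hW.2.2.2.2⟩
  constructor
  · intro hsupp
    set S : Finset (STCut V s t) :=
      Finset.univ.filter (fun C : STCut V s t => C.1 v₁ = true ∧ C.1 v₂ = false) with hS
    set N : ℝ := (2:ℝ) ^ A.card with hN
    have hNne : N ≠ 0 := by positivity
    refine ⟨fun W => (4 * N)⁻¹ * ∑ C ∈ S, h C * eFun W C, ?_⟩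
    funext C
    rw [Finset.sum_apply]
    simp only [Pi.smul_apply, Pi.sub_apply, Pi.add_apply, smul_eq_mul]
    have hco : ∀ W ∈ Finset.univ.filter
        (fun W : Finset V => s ∉ W ∧ t ∉ W ∧ v₁ ∉ W ∧ v₂ ∉ W),
        ((4 * N)⁻¹ * ∑ C' ∈ S, h C' * eFun W C') *
          (eFun W C - eFun (insert v₁ W) C + eFun (insert v₂ W) C
            - eFun (insert v₁ (insert v₂ W)) C)
        = ((4 * N)⁻¹ * ∑ C' ∈ S, h C' * eFun W C') *
            (if C.1 v₁ = true ∧ C.1 v₂ = false then 4 * eFun W C else 0) := by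
      intro W hW
      rw [combo_eval W (hmem W hW).1 (hmem W hW).2 hne]
    rw [Finset.sum_congr rfl hco]
    by_cases hC : C.1 v₁ = true ∧ C.1 v₂ = false
    · simp only [if_pos hC]
      have hCS : C ∈ S := by simp [hS, hC]
      rw [index_eq]
      have step : ∀ W ∈ A.powerset,
          ((4 * N)⁻¹ * ∑ C' ∈ S, h C' * eFun W C') * (4 * eFun W C)
            = N⁻¹ * ∑ C' ∈ S, h C' * (eFun W C' * eFun W C) := by
        intro W _
        rw [Finset.mul_sum, Finset.mul_sum, Finset.sum_mul]
        refine Finset.sum_congr rfl fun C' _ => ?_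
        field_simp
      rw [Finset.sum_congr rfl step, ← Finset.mul_sum, Finset.sum_comm]
      have inner : ∀ C' ∈ S, ∑ W ∈ A.powerset, h C' * (eFun W C' * eFun W C)
          = h C' * (if C' = C then N else 0) := by
        intro C' hC'
        rw [← Finset.mul_sum, orth A C' C]
        congr 1
        by_cases heq : C' = C
        · rw [if_pos heq, if_pos (by intro v _; rw [heq]), hN]
        · rw [if_neg heq, if_neg]
          intro hall
          apply heq
          apply Subtype.ext
          funext v
          by_cases hvA : v ∈ A
          · exact hall v hvA
          · simp only [hA, Finset.mem_sdiff, Finset.mem_univ, true_and,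
              Finset.mem_insert, Finset.mem_singleton, not_not] at hvA
            simp only [hS, Finset.mem_filter] at hC'
            rcases hvA with rfl | rfl | rfl | rfl
            · rw [C'.2.1, C.2.1]
            · rw [C'.2.2, C.2.2]
            · rw [hC'.2.1, hC.1]
            · rw [hC'.2.2, hC.2]
      rw [Finset.sum_congr rfl inner]
      simp only [mul_ite, mul_zero]
      rw [Finset.sum_ite_eq' S C (fun C' => h C' * N), if_pos hCS]
      field_simp
    · simp only [if_neg hC, mul_zero, Finset.sum_const_zero]
      exact hsupp C hC
  · rintro ⟨c, rfl⟩ C hC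
    rw [Finset.sum_apply]
    refine Finset.sum_eq_zero fun W hW => ?_
    simp only [Pi.smul_apply, Pi.sub_apply, Pi.add_apply, smul_eq_mul]
    rw [combo_eval W (hmem W hW).1 (hmem W hW).2 hne, if_neg hC, mul_zero]
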